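/- Let α, β ∈ ℕ and f, g ∈ C^{2β+4}[-1,1]. Then h_{α,β}^{-1} ∫_{-1}^{1} L̃f(x)·g(x)·(1-x)^α(1+x)^β dx = Ṽ(f,g) + 2(β+1)·b_{β,α}·f'(-1)g(-1), where L̃f(x) = ((x+1)/(x-1)^α) D_x^{β+2}{(x-1)^{α+β+2} D_x^{β+2}[(x+1)^{β+1} f(x)]}, Ṽ(f,g) = h_{α,β}^{-1} ∫_{-1}^{1} D_x^{β+2}[(x+1)^{β+1}f(x)] · D_x^{β+2}[(x+1)^{β+1}g(x)] · (1-x)^{α+β+2} dx, b_{β,α} = (β+2)!·(α+1)_{β+1}, and h_{α,β} = 2^{α+β+1}α!β!/(α+β+1)!. -/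

import Mathlib

open intervalIntegral MeasureTheory


/-- Pochhammer symbol `(a)_k` for real `a`. -/
noncomputable def poch (a : ℝ) (k : ℕ) : ℝ := (ascPochhammer ℝ k).eval a

/-- The normalizing constant `h_{α,β} = 2^{α+β+1} α! β! / (α+β+1)!`. -/
noncomputable def hconst (α β : ℕ) : ℝ :=
  2 ^ (α + β + 1) * (Nat.factorial α : ℝ) * (Nat.factorial β : ℝ) /
    (Nat.factorial (α + β + 1) : ℝ)

lemma cd_mono {m n : ℕ} {f : ℝ → ℝ} (h : ContDiff ℝ ((n : ℕ) : ℕ∞) f) (hmn : m ≤ n) :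
    ContDiff ℝ ((m : ℕ) : ℕ∞) f :=
  h.of_le (by exact_mod_cast Nat.cast_le.mpr hmn)

lemma cd_deriv {n : ℕ} {f : ℝ → ℝ} (h : ContDiff ℝ ((n+1 : ℕ) : ℕ∞) f) :
    ContDiff ℝ (n : ℕ∞) (deriv f) := by
  have h' : ContDiff ℝ ((n : ℕ∞) + 1) f := by exact_mod_cast h
  exact (contDiff_succ_iff_deriv.mp h').2.2

lemma cd_diff {n : ℕ} {f : ℝ → ℝ} (h : ContDiff ℝ ((n+1 : ℕ) : ℕ∞) f) :
    Differentiable ℝ f := by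
  have h' : ContDiff ℝ ((n : ℕ∞) + 1) f := by exact_mod_cast h
  exact (contDiff_succ_iff_deriv.mp h').1

lemma cd_iter {n k : ℕ} {f : ℝ → ℝ} (h : ContDiff ℝ ((n : ℕ) : ℕ∞) f) (hk : k ≤ n) :
    ContDiff ℝ ((n - k : ℕ) : ℕ∞) (deriv^[k] f) :=
  ContDiff.iterate_deriv' (n - k) k (cd_mono h (by omega))

lemma cd_iter_cont {n k : ℕ} {f : ℝ → ℝ} (h : ContDiff ℝ ((n : ℕ) : ℕ∞) f) (hk : k ≤ n) :
    Continuous (deriv^[k] f) :=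
  (ContDiff.iterate_deriv' 0 k (cd_mono h (by omega))).continuous

lemma ibp_iter (a b : ℝ) : ∀ (n : ℕ) (u w : ℝ → ℝ), ContDiff ℝ (n : ℕ∞) u → ContDiff ℝ (n : ℕ∞) w →
    ∫ x in a..b, u x * deriv^[n] w x =
      (∑ j ∈ Finset.range n, (-1:ℝ)^j *
        (deriv^[j] u b * deriv^[n-1-j] w b - deriv^[j] u a * deriv^[n-1-j] w a))
      + (-1:ℝ)^n * ∫ x in a..b, deriv^[n] u x * w x := by
  intro n
  induction n with
  | zero => intro u w hu hw; simp
  | succ n ih =>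
    intro u w hu hw
    have hu1 : Differentiable ℝ u := cd_diff hu
    have hDnw : ContDiff ℝ ((n+1-n : ℕ) : ℕ∞) (deriv^[n] w) := cd_iter hw (by omega)
    have hDnw_diff : Differentiable ℝ (deriv^[n] w) := by
      have e : n+1-n = 1 := by omega
      rw [e] at hDnw
      exact hDnw.differentiable (by simp)
    have step1 : ∫ x in a..b, u x * deriv^[n+1] w x
        = u b * deriv^[n] w b - u a * deriv^[n] w a - ∫ x in a..b, deriv u x * deriv^[n] w x := by
      have h1 : ∀ x ∈ Set.uIcc a b, HasDerivAt u (deriv u x) x :=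
        fun x _ => (hu1 x).hasDerivAt
      have h2 : ∀ x ∈ Set.uIcc a b, HasDerivAt (deriv^[n] w) (deriv^[n+1] w x) x := by
        intro x _
        rw [Function.iterate_succ_apply']
        exact (hDnw_diff x).hasDerivAt
      have hint1 : IntervalIntegrable (deriv u) volume a b :=
        ((cd_deriv hu).continuous).intervalIntegrable a b
      have hint2 : IntervalIntegrable (deriv^[n+1] w) volume a b :=
        (cd_iter_cont hw (le_refl _)).intervalIntegrable a b
      exact integral_mul_deriv_eq_deriv_mul h1 h2 hint1 hint2
    have ihh := ih (deriv u) w (cd_deriv hu) (cd_mono hw (by omega))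
    rw [step1, ihh]
    rw [Finset.sum_range_succ']
    have hre : ∀ j, deriv^[j] (deriv u) = deriv^[j+1] u := by
      intro j; rw [Function.iterate_succ]; rfl
    have hcong : ∀ j ∈ Finset.range n, (-1:ℝ)^j *
        (deriv^[j] (deriv u) b * deriv^[n-1-j] w b - deriv^[j] (deriv u) a * deriv^[n-1-j] w a)
        = -((-1:ℝ)^(j+1) * (deriv^[j+1] u b * deriv^[n+1-1-(j+1)] w b
            - deriv^[j+1] u a * deriv^[n+1-1-(j+1)] w a)) := by
      intro j hj
      rw [hre j]
      have : n+1-1-(j+1) = n-1-j := by omega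
      rw [this, pow_succ]
      ring
    rw [Finset.sum_congr rfl hcong, Finset.sum_neg_distrib, hre n]
    simp only [Nat.add_sub_cancel, Nat.sub_zero, pow_succ, pow_zero, Function.iterate_zero_apply]
    ring

lemma shift_struct (c : ℝ) (q : ℝ → ℝ) (N : ℕ) (hq : ContDiff ℝ ((N:ℕ):ℕ∞) q) :
    ∀ j, j ≤ N → ∀ m, j ≤ m →
    ∃ r : ℝ → ℝ, ContDiff ℝ ((N - j : ℕ) : ℕ∞) r ∧
      deriv^[j] (fun x => (x - c)^m * q x) = (fun x => (x - c)^(m-j) * r x) ∧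
      r c = (∏ i ∈ Finset.range j, ((m:ℝ) - i)) * q c ∧
      (j + 1 ≤ N → deriv r c = (∏ i ∈ Finset.range j, ((m:ℝ) + 1 - i)) * deriv q c) := by
  intro j
  induction j with
  | zero =>
    intro _ m _
    exact ⟨q, hq, by simp, by simp, fun _ => by simp⟩
  | succ j ih =>
    intro hjN m hjm
    obtain ⟨r, hr, hfun, hval, hder⟩ := ih (by omega) m (by omega)
    have hrdiff : Differentiable ℝ r := by
      have : ContDiff ℝ (((N - j - 1) + 1 : ℕ) : ℕ∞) r := by
        rw [show N - j - 1 + 1 = N - j by omega]; exact hr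
      exact cd_diff this
    have hr' : ContDiff ℝ ((N - (j+1) : ℕ) : ℕ∞) (deriv r) := by
      have : ContDiff ℝ (((N - (j+1)) + 1 : ℕ) : ℕ∞) r := by
        rw [show N - (j+1) + 1 = N - j by omega]; exact hr
      exact cd_deriv this
    refine ⟨fun x => ((m:ℝ) - j) * r x + (x - c) * deriv r x, ?_, ?_, ?_, ?_⟩
    · exact (contDiff_const.mul (cd_mono hr (by omega))).add
        (((contDiff_id.sub contDiff_const).of_le le_top |>.of_le (by exact le_top)).mul hr')
    · rw [Function.iterate_succ_apply', hfun]
      funext x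
      have h1 : HasDerivAt (fun x : ℝ => (x - c)^(m-j)) ((m-j : ℕ) * (x - c)^(m-j-1)) x := by
        simpa [Pi.pow_def] using ((hasDerivAt_id x).sub_const c).pow (m-j)
      have h2 : HasDerivAt (fun x : ℝ => (x - c)^(m-j) * r x)
          ((m-j : ℕ) * (x - c)^(m-j-1) * r x + (x - c)^(m-j) * deriv r x) x :=
        h1.mul (hrdiff x).hasDerivAt
      rw [h2.deriv]
      have e1 : m - j = (m - (j+1)) + 1 := by omega
      have e2 : ((m - j : ℕ) : ℝ) = (m : ℝ) - j := by
        push_cast [Nat.cast_sub (by omega : j ≤ m)]; ring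
      rw [e2, e1, pow_succ, show m - (j+1) + 1 - 1 = m - (j+1) by omega]
      ring
    · simp only [sub_self, zero_mul, add_zero, mul_zero]
      rw [hval, Finset.prod_range_succ]
      ring
    · intro hj2N
      have hrd2 : Differentiable ℝ (deriv r) := by
        have : ContDiff ℝ (((N - (j+2)) + 1 : ℕ) : ℕ∞) (deriv r) := by
          rw [show N - (j+2) + 1 = N - (j+1) by omega]; exact hr'
        exact cd_diff this
      have hd : HasDerivAt (fun x => ((m:ℝ) - j) * r x + (x - c) * deriv r x)
          (((m:ℝ) - j) * deriv r c + (1 * deriv r c + (c - c) * deriv (deriv r) c)) c := by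
        exact (((hrdiff c).hasDerivAt).const_mul _).add
          ((((hasDerivAt_id c).sub_const c).mul (hrd2 c).hasDerivAt))
      rw [hd.deriv, hder (by omega), Finset.prod_range_succ]
      ring

lemma prod_desc (m : ℕ) : ∀ k, k ≤ m →
    (∏ i ∈ Finset.range k, ((m:ℝ) - i)) * (Nat.factorial (m - k) : ℝ) = (Nat.factorial m : ℝ) := by
  intro k
  induction k with
  | zero => simp
  | succ k ih =>
    intro hk
    rw [Finset.prod_range_succ]
    have h2 : (Nat.factorial (m-k) : ℝ) = ((m:ℝ) - k) * (Nat.factorial (m - (k+1)) : ℝ) := by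
      rw [show m - k = (m - (k+1)) + 1 by omega, Nat.factorial_succ]
      push_cast [Nat.cast_sub (by omega : k + 1 ≤ m)]
      ring
    calc (∏ i ∈ Finset.range k, ((m:ℝ) - i)) * ((m:ℝ) - k) * (Nat.factorial (m - (k+1)) : ℝ)
        = (∏ i ∈ Finset.range k, ((m:ℝ) - i)) * (Nat.factorial (m-k) : ℝ) := by rw [h2]; ring
      _ = _ := ih (by omega)

lemma poch_fact (k : ℕ) : ∀ n : ℕ, (ascPochhammer ℝ k).eval ((n:ℝ) + 1) * (Nat.factorial n : ℝ)
    = (Nat.factorial (n + k) : ℝ) := by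
  induction k with
  | zero => intro n; simp [ascPochhammer_zero]
  | succ k ih =>
    intro n
    rw [ascPochhammer_succ_eval]
    have := ih n
    rw [show n + (k+1) = (n + k) + 1 by omega, Nat.factorial_succ]
    push_cast
    nlinarith [this]
/-- for `f, g ∈ C^{2β+4}[-1,1]`,
`h⁻¹ ∫ (L̃f) g (1-x)^α (1+x)^β dx = Ṽ(f,g) + 2(β+1) b_{β,α} f'(-1) g(-1)`,
with `b_{β,α} = (β+2)! (α+1)_{β+1}`. -/
theorem Ltilde_symmetric_form (α β : ℕ) (f g : ℝ → ℝ)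
    (hf : ContDiff ℝ ((2 * β + 4 : ℕ) : ℕ∞) f) (hg : ContDiff ℝ ((2 * β + 4 : ℕ) : ℕ∞) g) :
    (hconst α β)⁻¹ *
      (∫ x in (-1 : ℝ)..1,
        (((x + 1) / (x - 1) ^ α) *
          deriv^[β + 2] (fun t => (t - 1) ^ (α + β + 2) *
            deriv^[β + 2] (fun s => (s + 1) ^ (β + 1) * f s) t) x)
          * g x * ((1 - x) ^ α * (1 + x) ^ β))
    = (hconst α β)⁻¹ *
        (∫ x in (-1 : ℝ)..1,
          deriv^[β + 2] (fun s => (s + 1) ^ (β + 1) * f s) x *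
            deriv^[β + 2] (fun s => (s + 1) ^ (β + 1) * g s) x * (1 - x) ^ (α + β + 2))
      + 2 * ((β : ℝ) + 1) * ((Nat.factorial (β + 2) : ℝ) * poch ((α : ℝ) + 1) (β + 1)) *
          deriv f (-1) * g (-1) := by
  set F : ℝ → ℝ := fun s => (s + 1) ^ (β + 1) * f s with hF_def
  set G : ℝ → ℝ := fun s => (s + 1) ^ (β + 1) * g s with hG_def
  set DF := deriv^[β+2] F with hDF_def
  set DG := deriv^[β+2] G with hDG_def
  set w : ℝ → ℝ := fun t => (t - 1) ^ (α+β+2) * DF t with hw_def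
  -- smoothness
  have hpoly : ∀ (k N : ℕ) (c : ℝ), ContDiff ℝ ((N:ℕ):ℕ∞) (fun s : ℝ => (s + c)^k) :=
    fun k N c => (contDiff_id.add contDiff_const).pow k
  have hF : ContDiff ℝ ((2*β+4 : ℕ):ℕ∞) F := (hpoly (β+1) (2*β+4) 1).mul hf
  have hG : ContDiff ℝ ((2*β+4 : ℕ):ℕ∞) G := (hpoly (β+1) (2*β+4) 1).mul hg
  have hDF : ContDiff ℝ ((β+2 : ℕ):ℕ∞) DF :=
    ContDiff.iterate_deriv' (β+2) (β+2)
      (by rw [show ((β+2)+(β+2) : ℕ) = 2*β+4 by omega]; exact hF)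
  have hwC : ContDiff ℝ ((β+2 : ℕ):ℕ∞) w := by
    have hp : ContDiff ℝ ((β+2 : ℕ):ℕ∞) (fun t : ℝ => (t - 1)^(α+β+2)) :=
      (contDiff_id.sub contDiff_const).pow _
    exact hp.mul hDF
  have hGC : ContDiff ℝ ((β+2 : ℕ):ℕ∞) G := cd_mono hG (by omega)
  have hGshift : G = fun s => (s - (-1))^(β+1) * g s := by
    funext s; rw [hG_def]; norm_num
  have hFshift : F = fun s => (s - (-1))^(β+1) * f s := by
    funext s; rw [hF_def]; norm_num
  -- boundary values
  have hw1 : ∀ k, k ≤ β+1 → deriv^[k] w 1 = 0 := by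
    intro k hk
    obtain ⟨r, _, hfun, _, _⟩ := shift_struct 1 DF (β+2) hDF k (by omega) (α+β+2) (by omega)
    have : deriv^[k] w = fun x => (x - 1)^(α+β+2-k) * r x := hfun
    rw [this]
    simp [zero_pow (by omega : α+β+2-k ≠ 0)]
  have hG0 : ∀ j, j ≤ β → deriv^[j] G (-1) = 0 := by
    intro j hj
    obtain ⟨r, _, hfun, _, _⟩ := shift_struct (-1) g (2*β+4) hg j (by omega) (β+1) (by omega)
    rw [hGshift, hfun]
    norm_num [zero_pow (by omega : β+1-j ≠ 0)]
  have hGb : deriv^[β+1] G (-1) = (Nat.factorial (β+1) : ℝ) * g (-1) := by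
    obtain ⟨r, _, hfun, hval, _⟩ := shift_struct (-1) g (2*β+4) hg (β+1) (by omega) (β+1) (by omega)
    rw [hGshift, hfun]
    have hprod : (∏ i ∈ Finset.range (β+1), (((β+1:ℕ):ℝ) - i)) = (Nat.factorial (β+1):ℝ) := by
      have := prod_desc (β+1) (β+1) le_rfl
      simpa using this
    simp only [Nat.sub_self, pow_zero, one_mul]
    rw [hval, hprod]
  have hDFb : DF (-1) = (Nat.factorial (β+2) : ℝ) * deriv f (-1) := by
    obtain ⟨r, _, hfun, _, hder⟩ := shift_struct (-1) f (2*β+4) hf (β+1) (by omega) (β+1) (by omega)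
    have h1 : deriv^[β+1] F = r := by
      rw [hFshift, hfun]; funext x; simp
    have h2 : DF (-1) = deriv r (-1) := by
      rw [hDF_def, show β+2 = (β+1)+1 by omega, Function.iterate_succ_apply', h1]
    rw [h2, hder (by omega)]
    have hprod : (∏ i ∈ Finset.range (β+1), (((β+1:ℕ):ℝ) + 1 - i)) = (Nat.factorial (β+2):ℝ) := by
      have h3 := prod_desc (β+2) (β+1) (by omega)
      rw [show (β+2) - (β+1) = 1 by omega, Nat.factorial_one] at h3
      rw [← h3, Nat.cast_one, mul_one]
      apply Finset.prod_congr rfl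
      intro i _
      push_cast
      ring
    rw [hprod]
  have hwb : w (-1) = (-2:ℝ)^(α+β+2) * ((Nat.factorial (β+2):ℝ) * deriv f (-1)) := by
    rw [hw_def]
    simp only
    rw [hDFb, show ((-1:ℝ) - 1) = -2 by norm_num]
  -- integral transformations
  have hne : ∀ᵐ (x:ℝ) ∂volume, x ∉ ({(1:ℝ)} : Set ℝ) :=
    measure_eq_zero_iff_ae_notMem.mp Real.volume_singleton
  have key1 : (∫ x in (-1:ℝ)..1,
        ((x + 1) / (x - 1) ^ α * deriv^[β+2] w x) * g x * ((1-x)^α * (1+x)^β))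
      = (-1:ℝ)^α * ∫ x in (-1:ℝ)..1, G x * deriv^[β+2] w x := by
    rw [← intervalIntegral.integral_const_mul]
    apply intervalIntegral.integral_congr_ae
    filter_upwards [hne] with x hx _
    have hx1 : (x - 1 : ℝ) ≠ 0 := sub_ne_zero.mpr (by simpa using hx)
    have hp : (1 - x:ℝ)^α = (-1:ℝ)^α * (x-1)^α := by
      rw [show (1-x:ℝ) = -(x-1) by ring, neg_pow]
    rw [hG_def, hp]
    field_simp
    ring
  have key2 := ibp_iter (-1) 1 (β+2) G w hGC hwC
  have hS : (∑ j ∈ Finset.range (β+2), (-1:ℝ)^j *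
        (deriv^[j] G 1 * deriv^[β+2-1-j] w 1 - deriv^[j] G (-1) * deriv^[β+2-1-j] w (-1)))
      = (-1:ℝ)^(β+1) * (0 - ((Nat.factorial (β+1):ℝ) * g (-1)) * w (-1)) := by
    rw [Finset.sum_eq_single (β+1)]
    · rw [hGb, show β+2-1-(β+1) = 0 by omega]
      simp only [Function.iterate_zero_apply]
      have h0 : w 1 = 0 := by
        have := hw1 0 (by omega); simpa using this
      rw [h0, mul_zero]
    · intro j hj hne'
      have hjb : j ≤ β := by
        simp only [Finset.mem_range] at hj; omega
      rw [hG0 j hjb, hw1 (β+2-1-j) (by omega)]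
      ring
    · intro h
      exact absurd (Finset.mem_range.mpr (by omega)) h
  have hI : (∫ x in (-1:ℝ)..1, deriv^[β+2] G x * w x)
      = (-1:ℝ)^(α+β+2) * ∫ x in (-1:ℝ)..1, (DF x * DG x * (1-x)^(α+β+2)) := by
    rw [← intervalIntegral.integral_const_mul]
    apply intervalIntegral.integral_congr
    intro x _
    show deriv^[β+2] G x * ((x - 1)^(α+β+2) * DF x) = _
    rw [show (x - 1:ℝ) = -(1-x) by ring, neg_pow, hDG_def]
    ring
  rw [key1, key2, hS, hI, hwb]
  -- final arithmetic
  have hsign : (-1:ℝ)^α * ((-1:ℝ)^(β+2) * (-1:ℝ)^(α+β+2)) = 1 := by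
    rw [← pow_add, ← pow_add, show α + (β+2+(α+β+2)) = 2*(α+β+2) by ring, pow_mul]
    norm_num
  have hsign2 : (-1:ℝ)^α * ((-1:ℝ)^(β+1) * (-2:ℝ)^(α+β+2)) = - (2:ℝ)^(α+β+2) := by
    rw [show (-2:ℝ) = (-1) * 2 by norm_num, mul_pow, show (-1:ℝ)^α * ((-1:ℝ)^(β+1) * ((-1:ℝ)^(α+β+2) * 2^(α+β+2))) = ((-1:ℝ)^(α+(β+1)+(α+β+2))) * 2^(α+β+2) by rw [pow_add, pow_add]; ring,
      show α+(β+1)+(α+β+2) = 2*(α+β+1)+1 by ring, pow_succ, pow_mul]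
    norm_num
  have hpoch : poch ((α:ℝ)+1) (β+1) * (Nat.factorial α : ℝ) = (Nat.factorial (α+β+1) : ℝ) := by
    have := poch_fact (β+1) α
    rw [show α + (β+1) = α+β+1 by omega] at this
    exact this
  have hfacα : (Nat.factorial α : ℝ) ≠ 0 := Nat.cast_ne_zero.mpr (Nat.factorial_ne_zero α)
  have hfacβ : (Nat.factorial β : ℝ) ≠ 0 := Nat.cast_ne_zero.mpr (Nat.factorial_ne_zero β)
  have hfacαβ : (Nat.factorial (α+β+1) : ℝ) ≠ 0 := Nat.cast_ne_zero.mpr (Nat.factorial_ne_zero _)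
  have h2p : ((2:ℝ)^(α+β+1)) ≠ 0 := by positivity
  have hhc : (hconst α β)⁻¹ = (Nat.factorial (α+β+1) : ℝ) /
      (2^(α+β+1) * (Nat.factorial α : ℝ) * (Nat.factorial β : ℝ)) := by
    rw [hconst, inv_div]
  have hfb1 : (Nat.factorial (β+1) : ℝ) = ((β:ℝ)+1) * (Nat.factorial β : ℝ) := by
    rw [Nat.factorial_succ]; push_cast; ring
  set I := ∫ (x : ℝ) in (-1:ℝ)..1, DF x * DG x * (1 - x) ^ (α + β + 2) with hI_def
  have step : (-1:ℝ)^α * ((-1:ℝ)^(β+1) *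
        (0 - (Nat.factorial (β+1):ℝ) * g (-1) * ((-2:ℝ)^(α+β+2) * ((Nat.factorial (β+2):ℝ) * deriv f (-1))))
      + (-1:ℝ)^(β+2) * ((-1:ℝ)^(α+β+2) * I))
      = 2^(α+β+2) * ((Nat.factorial (β+1):ℝ) * g (-1) * ((Nat.factorial (β+2):ℝ) * deriv f (-1))) + I := by
    linear_combination (-((Nat.factorial (β+1):ℝ) * g (-1) * ((Nat.factorial (β+2):ℝ) * deriv f (-1)))) * hsign2 + I * hsign
  rw [step, mul_add]
  have hfinal : (hconst α β)⁻¹ * (2^(α+β+2) * ((Nat.factorial (β+1):ℝ) * g (-1) * ((Nat.factorial (β+2):ℝ) * deriv f (-1))))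
      = 2 * ((β : ℝ) + 1) * ((Nat.factorial (β + 2) : ℝ) * poch ((α : ℝ) + 1) (β + 1)) *
          deriv f (-1) * g (-1) := by
    have hP : poch ((α:ℝ)+1) (β+1) = (Nat.factorial (α+β+1) : ℝ) / (Nat.factorial α : ℝ) := by
      field_simp
      linarith [hpoch]
    rw [hhc, hfb1, hP]
    field_simp
    ring
  rw [hfinal]
  ring
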